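/- For every r > 0, the function d ↦ (1/√(2πr)) ∫_d^∞ e^{-u²/(2r)} du is log-concave on ℝ. -/

import Mathlib

open MeasureTheory Set Filter intervalIntegral

namespace GaussAux

noncomputable def g (r u : ℝ) : ℝ := Real.exp (-u ^ 2 / (2 * r))
noncomputable def G (r d : ℝ) : ℝ := ∫ u in Set.Ioi d, g r u

variable {r : ℝ} (hr : 0 < r)

lemma g_eq (u : ℝ) : g r u = Real.exp (-(1 / (2 * r)) * u ^ 2) := by
  unfold g; ring_nf

lemma g_pos (u : ℝ) : 0 < g r u := Real.exp_pos _

lemma g_cont : Continuous (g r) := by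
  unfold g; fun_prop

include hr

lemma g_integrable : Integrable (g r) := by
  have : (g r) = fun u => Real.exp (-(1 / (2 * r)) * u ^ 2) := funext (g_eq)
  rw [this]
  exact integrable_exp_neg_mul_sq (by positivity)

lemma G_pos (d : ℝ) : 0 < G r d := by
  rw [G]
  refine (setIntegral_pos_iff_support_of_nonneg_ae
    (Filter.Eventually.of_forall fun x => (g_pos x).le)
    (g_integrable hr).integrableOn).2 ?_
  have h : Function.support (g r) ∩ Ioi d = Ioi d := by
    have : Function.support (g r) = Set.univ := by
      ext u; simp [Function.mem_support, (g_pos (r := r) u).ne']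
    rw [this, univ_inter]
  rw [h]
  simp [Real.volume_Ioi]

lemma G_eq (d : ℝ) : G r d = G r 0 - ∫ u in (0:ℝ)..d, g r u := by
  have hi := g_integrable hr
  have h1 := integral_Iic_add_Ioi (μ := volume) hi.integrableOn hi.integrableOn (b := d)
  have h2 := integral_Iic_add_Ioi (μ := volume) hi.integrableOn hi.integrableOn (b := (0:ℝ))
  have h3 := integral_Iic_sub_Iic (μ := volume) (f := g r) hi.integrableOn hi.integrableOn (a := 0) (b := d)
  unfold G
  linarith

lemma G_hasDerivAt (d : ℝ) : HasDerivAt (G r) (-(g r d)) d := by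
  have h : HasDerivAt (fun d => G r 0 - ∫ u in (0:ℝ)..d, g r u) (-(g r d)) d := by
    have h := (intervalIntegral.integral_hasDerivAt_right (a := (0:ℝ)) (b := d)
      ((g_integrable hr).intervalIntegrable)
      ((g_cont (r := r)).stronglyMeasurableAtFilter _ _) (g_cont (r := r)).continuousAt)
    simpa using (h.const_sub (G r 0))
  exact h.congr_of_eventuallyEq (Filter.Eventually.of_forall fun x => G_eq hr x)

lemma g_hasDerivAt (u : ℝ) : HasDerivAt (g r) (-(u / r) * g r u) u := by
  have h1 : HasDerivAt (fun u : ℝ => -u ^ 2 / (2 * r)) (-(u / r)) u := by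
    have h : HasDerivAt (fun u : ℝ => -u ^ 2 / (2 * r)) (-(2 * u ^ 1) / (2 * r)) u := by
      simpa using ((hasDerivAt_pow 2 u).neg.div_const (2 * r))
    convert h using 1
    field_simp
  unfold g
  simpa [mul_comm] using h1.exp

lemma tendsto_g : Tendsto (g r) atTop (nhds 0) := by
  have h1 : Tendsto (fun u : ℝ => -(1 / (2 * r)) * u ^ 2) atTop atBot :=
    (tendsto_pow_atTop (two_ne_zero)).const_mul_atTop_of_neg (neg_neg_iff_pos.2 (by positivity))
  have := Real.tendsto_exp_atBot.comp h1
  refine this.congr fun u => (g_eq u).symm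

/-- Gaussian tail bound: `(d/r) * G r d ≤ g r d`. -/
lemma tail_bound (d : ℝ) : d / r * G r d ≤ g r d := by
  rcases le_or_gt d 0 with hd | hd
  · have h : d / r * G r d ≤ 0 :=
      mul_nonpos_of_nonpos_of_nonneg (div_nonpos_of_nonpos_of_nonneg hd hr.le) (G_pos hr d).le
    exact h.trans (g_pos d).le
  · have hf : ∀ x ∈ Ici d, HasDerivAt (fun u => -(r * g r u)) (x * g r x) x := by
      intro x _
      have h := ((g_hasDerivAt hr x).const_mul r).neg
      convert h using 1
      · rfl
      · rfl
      · rfl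
      · rw [neg_mul, mul_neg, neg_neg, ← mul_assoc, mul_div_cancel₀ _ hr.ne']
    have hpos : ∀ x ∈ Ioi d, 0 ≤ x * g r x := fun x hx =>
      mul_nonneg (hd.trans hx).le (g_pos x).le
    have htend : Tendsto (fun u => -(r * g r u)) atTop (nhds 0) := by
      have := ((tendsto_g hr).const_mul r).neg
      simpa using this
    have hval : (∫ x in Ioi d, x * g r x) = 0 - -(r * g r d) :=
      integral_Ioi_of_hasDerivAt_of_nonneg' hf hpos htend
    have hint : IntegrableOn (fun x => x * g r x) (Ioi d) :=
      integrableOn_Ioi_deriv_of_nonneg' hf hpos htend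
    have hmono : G r d ≤ ∫ x in Ioi d, d⁻¹ * (x * g r x) := by
      refine setIntegral_mono_on (g_integrable hr).integrableOn (hint.const_mul _)
        measurableSet_Ioi ?_
      intro x hx
      have hx' : d ≤ x := (le_of_lt hx)
      have : 1 ≤ d⁻¹ * x := by
        rw [inv_mul_eq_div, le_div_iff₀ hd]; simpa using hx'
      calc g r x = 1 * g r x := (one_mul _).symm
        _ ≤ d⁻¹ * x * g r x := by
            exact mul_le_mul_of_nonneg_right this (g_pos x).le
        _ = d⁻¹ * (x * g r x) := by ring
    rw [MeasureTheory.integral_const_mul, hval] at hmono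
    have : d / r * G r d ≤ d / r * (d⁻¹ * (0 - -(r * g r d))) :=
      mul_le_mul_of_nonneg_left hmono (by positivity)
    calc d / r * G r d ≤ d / r * (d⁻¹ * (0 - -(r * g r d))) := this
      _ = g r d := by field_simp; ring

lemma ratio_monotone : Monotone (fun d => g r d / G r d) := by
  have hdiff : ∀ d, HasDerivAt (fun d => g r d / G r d)
      ((-(d / r) * g r d * G r d - g r d * -(g r d)) / (G r d) ^ 2) d := fun d =>
    (g_hasDerivAt hr d).div (G_hasDerivAt hr d) (G_pos hr d).ne'
  refine monotone_of_deriv_nonneg (fun d => (hdiff d).differentiableAt) fun d => ?_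
  rw [(hdiff d).deriv]
  have h1 : 0 ≤ -(d / r) * g r d * G r d - g r d * -(g r d) := by
    have := tail_bound hr d
    have hG := G_pos hr d
    have hg := g_pos d (r := r)
    nlinarith [mul_le_mul_of_nonneg_left this hg.le]
  positivity

lemma logG_concave : ConcaveOn ℝ Set.univ (fun d => Real.log (G r d)) := by
  have hderiv : ∀ d, HasDerivAt (fun d => Real.log (G r d)) (-(g r d) / G r d) d := fun d =>
    (G_hasDerivAt hr d).log (G_pos hr d).ne'
  refine AntitoneOn.concaveOn_of_deriv convex_univ ?_ ?_ ?_
  · exact Continuous.continuousOn (by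
      exact continuous_iff_continuousAt.2 fun d => ((hderiv d).differentiableAt).continuousAt)
  · exact fun d _ => ((hderiv d).differentiableAt).differentiableWithinAt
  · intro a _ b _ hab
    rw [(hderiv a).deriv, (hderiv b).deriv]
    have := ratio_monotone hr hab
    simp only [neg_div] at *
    linarith

end GaussAux

/-- The complementary CDF of a centered Gaussian with variance `r > 0` is
log-concave: positive, with concave logarithm. -/
theorem gaussian_ccdf_var_log_concave (r : ℝ) (hr : 0 < r)
    (F : ℝ → ℝ)
    (hF : ∀ d, F d = (Real.sqrt (2 * Real.pi * r))⁻¹ *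
      ∫ u in Set.Ioi d, Real.exp (-u ^ 2 / (2 * r))) :
    (∀ d, 0 < F d) ∧ ConcaveOn ℝ Set.univ (fun d => Real.log (F d)) := by
  have hc : 0 < (Real.sqrt (2 * Real.pi * r))⁻¹ := by
    have : 0 < 2 * Real.pi * r := by positivity
    positivity
  have hFd : ∀ d, F d = (Real.sqrt (2 * Real.pi * r))⁻¹ * GaussAux.G r d := fun d => hF d
  constructor
  · intro d
    rw [hFd d]
    exact mul_pos hc (GaussAux.G_pos hr d)
  · have : (fun d => Real.log (F d)) =
        fun d => Real.log (Real.sqrt (2 * Real.pi * r))⁻¹ + Real.log (GaussAux.G r d) := by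
      funext d
      rw [hFd d, Real.log_mul hc.ne' (GaussAux.G_pos hr d).ne']
    rw [this]
    exact (concaveOn_const _ convex_univ).add (GaussAux.logG_concave hr)
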